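/- Let (z_i)_{1≤i≤2N+1} be a weakly decreasing sequence of nonnegative integers arising from a (1,1)-special bipartition, i.e., z_{2i-1} = λ_i + N + 1 − i and z_{2i} = μ_i + N − i with λ_i + 1 ≥ μ_i ≥ λ_{i+1} for all i. Define z̃_i = 2z_i + 1 if (i odd and z_{i−1} > z_i) or (i even and z_i = z_{i+1}), and z̃_i = 2z_i otherwise. Then z̃_1 ≥ z̃_2 ≥ … ≥ z̃_{2N+1}, and for each d, Σ_{i≤d} z̃_i = ε_d + ⌊(d+1)/2⌋ + 2·Σ_{i≤d} z_i, where ε_d = 1 if d is even and z_d = z_{d+1}, and ε_d = 0 otherwise. -/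

import Mathlib

/-- Partial sum of the first `d` parts of a partition (given as a function). -/
def psum (f : ℕ → ℕ) (d : ℕ) : ℕ := ∑ i ∈ Finset.range d, f i

theorem special_bipartition_doubling (n N : ℕ) (l m z : ℕ → ℕ)
    (hl : Antitone l) (hm : Antitone m)
    (hlN : ∀ i, N + 1 ≤ i → l i = 0) (hmN : ∀ j, N ≤ j → m j = 0)
    (hn : psum l (N + 1) + psum m N = n)
    (hsp : ∀ i, i < N → m i ≤ l i + 1 ∧ l (i + 1) ≤ m i)
    (hzodd : ∀ i, 1 ≤ i → i ≤ N + 1 → z (2 * i - 1) = l (i - 1) + N + 1 - i)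
    (hzeven : ∀ i, 1 ≤ i → i ≤ N → z (2 * i) = m (i - 1) + N - i) :
    (∀ i, 1 ≤ i → i + 1 ≤ 2 * N + 1 →
      (2 * z (i + 1) +
        (if ((i + 1) % 2 = 1 ∧ (i + 1 = 1 ∨ z (i + 1) < z i)) ∨
            ((i + 1) % 2 = 0 ∧ z (i + 1) = z (i + 2)) then 1 else 0))
      ≤ (2 * z i +
        (if (i % 2 = 1 ∧ (i = 1 ∨ z i < z (i - 1))) ∨
            (i % 2 = 0 ∧ z i = z (i + 1)) then 1 else 0))) ∧
    (∀ d, 1 ≤ d → d ≤ 2 * N + 1 →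
      ∑ i ∈ Finset.Icc 1 d,
        (2 * z i +
          (if (i % 2 = 1 ∧ (i = 1 ∨ z i < z (i - 1))) ∨
              (i % 2 = 0 ∧ z i = z (i + 1)) then 1 else 0))
        = (if d % 2 = 0 ∧ z d = z (d + 1) then 1 else 0) + (d + 1) / 2 +
          2 * ∑ i ∈ Finset.Icc 1 d, z i) := by
  -- z is weakly decreasing on the range of interest
  have hz_anti : ∀ i, 1 ≤ i → i + 1 ≤ 2 * N + 1 → z (i + 1) ≤ z i := by
    intro i h1 h2
    rcases Nat.even_or_odd i with he | ho
    · obtain ⟨k, hk⟩ := he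
      have hk1 : 1 ≤ k := by omega
      have hkN : k ≤ N := by omega
      have h1' := hzeven k hk1 hkN
      have h2' := hzodd (k + 1) (by omega) (by omega)
      have h3' := (hsp (k - 1) (by omega)).2
      have e1 : 2 * k = i := by omega
      have e2 : 2 * (k + 1) - 1 = i + 1 := by omega
      have e3 : k + 1 - 1 = k := by omega
      rw [e1] at h1'
      rw [e2, e3] at h2'
      have e4 : k - 1 + 1 = k := by omega
      rw [e4] at h3'
      omega
    · obtain ⟨k, hk⟩ := ho
      have hkN : k + 1 ≤ N := by omega
      have h1' := hzodd (k + 1) (by omega) (by omega)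
      have h2' := hzeven (k + 1) (by omega) hkN
      have h3' := (hsp k (by omega)).1
      have e1 : 2 * (k + 1) - 1 = i := by omega
      have e2 : 2 * (k + 1) = i + 1 := by omega
      have e3 : k + 1 - 1 = k := by omega
      rw [e1, e3] at h1'
      rw [e2, e3] at h2'
      omega
  -- no triple equality starting at an odd index
  have hz_triple : ∀ i, 1 ≤ i → i % 2 = 1 → i + 2 ≤ 2 * N + 1 →
      z i = z (i + 1) → z (i + 1) ≠ z (i + 2) := by
    intro i h1 hodd h2 heq
    obtain ⟨k, hk⟩ : ∃ k, i = 2 * k + 1 := ⟨i / 2, by omega⟩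
    have hkN : k + 1 ≤ N := by omega
    have h1' := hzodd (k + 1) (by omega) (by omega)
    have h2' := hzeven (k + 1) (by omega) hkN
    have h3' := hzodd (k + 2) (by omega) (by omega)
    have hll : l (k + 1) ≤ l k := hl (by omega)
    have e1 : 2 * (k + 1) - 1 = i := by omega
    have e2 : 2 * (k + 1) = i + 1 := by omega
    have e3 : k + 1 - 1 = k := by omega
    have e4 : 2 * (k + 2) - 1 = i + 2 := by omega
    have e5 : k + 2 - 1 = k + 1 := by omega
    rw [e1, e3] at h1'
    rw [e2, e3] at h2'
    rw [e4, e5] at h3'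
    omega
  constructor
  · intro i h1 h2
    have ha1 : z (i + 1) ≤ z i := hz_anti i h1 h2
    rcases Nat.even_or_odd i with he | ho
    · obtain ⟨k, hk⟩ := he
      have hio : i % 2 = 0 := by omega
      split_ifs <;> omega
    · obtain ⟨k, hk⟩ := ho
      have hio : i % 2 = 1 := by omega
      by_cases heq : z i = z (i + 1)
      · have htr : z (i + 1) ≠ z (i + 2) := hz_triple i h1 hio (by omega) heq
        split_ifs <;> omega
      · split_ifs <;> omega
  · intro d
    induction d with
    | zero => intro h; omega
    | succ d ih =>
      intro h1 h2
      rcases Nat.lt_or_ge d 1 with hd1 | hd1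
      · have hd0 : d = 0 := by omega
        subst hd0
        simp only [Nat.zero_add]
        simp only [Finset.Icc_self, Finset.sum_singleton]
        rw [if_pos (Or.inl ⟨trivial, Or.inl trivial⟩ :
          (True ∧ (True ∨ z 1 < z (1 - 1))) ∨
            ((1:ℕ) % 2 = 0 ∧ z 1 = z (1 + 1))),
          if_neg (by omega : ¬((1:ℕ) % 2 = 0 ∧ z 1 = z (1 + 1)))]
        omega
      · have ihh := ih hd1 (by omega)
        rw [Finset.sum_Icc_succ_top (by omega : 1 ≤ d + 1),
          Finset.sum_Icc_succ_top (by omega : 1 ≤ d + 1), ihh]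
        have ha1 : z (d + 1) ≤ z d := hz_anti d hd1 h2
        simp only [Nat.add_sub_cancel]
        rcases Nat.even_or_odd d with he | ho
        · obtain ⟨k, hk⟩ := he
          have hdo : d % 2 = 0 := by omega
          split_ifs <;> omega
        · obtain ⟨k, hk⟩ := ho
          have hdo : d % 2 = 1 := by omega
          split_ifs <;> omega
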